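/- Let r ≤ k ≤ n be positive integers and let G be a simple graph on vertex set {1,…,k}. Then α(G) ≥ r if and only if there exists X ∈ V(k,n) with x_{ij} = 0 for all i ≠ j, with x_{ii} + x_{jj} ≤ 0 for every edge {i,j} of G, and with Σ_{i=1}^k x_{ii} ≥ 2r − k. -/

import Mathlib

open Matrix

/-- The stability (independence) number of a simple graph on `Fin m`. -/
noncomputable def stabNum {m : ℕ} (G : SimpleGraph (Fin m)) : ℕ :=
  sSup {r | ∃ s : Finset (Fin m), (∀ i ∈ s, ∀ j ∈ s, ¬ G.Adj i j) ∧ s.card = r}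

lemma sum_pm {k : ℕ} (s : Finset (Fin k)) :
    ∑ i : Fin k, (if i ∈ s then (1:ℝ) else -1) = 2 * s.card - k := by
  have : ∀ i : Fin k, (if i ∈ s then (1:ℝ) else -1)
      = 2 * (if i ∈ s then (1:ℝ) else 0) - 1 := by
    intro i; split <;> norm_num
  rw [Finset.sum_congr rfl (fun i _ => this i)]
  rw [Finset.sum_sub_distrib, ← Finset.mul_sum, Finset.sum_ite_mem,
    Finset.univ_inter, Finset.sum_const, Finset.sum_const]
  simp [mul_comm]

theorem stmt1 (r k n : ℕ) (hr : 0 < r) (hrk : r ≤ k) (hkn : k ≤ n)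
    (G : SimpleGraph (Fin k)) :
    r ≤ stabNum G ↔
      ∃ X : Matrix (Fin n) (Fin k) ℝ,
        Xᵀ * X = 1 ∧
        (∀ (i : Fin n) (j : Fin k), (i : ℕ) ≠ (j : ℕ) → X i j = 0) ∧
        (∀ i j : Fin k, G.Adj i j →
          X (Fin.castLE hkn i) i + X (Fin.castLE hkn j) j ≤ 0) ∧
        2 * (r : ℝ) - k ≤ ∑ i : Fin k, X (Fin.castLE hkn i) i := by
  have hbdd : BddAbove {r | ∃ s : Finset (Fin k),
      (∀ i ∈ s, ∀ j ∈ s, ¬ G.Adj i j) ∧ s.card = r} := by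
    refine ⟨k, fun x hx => ?_⟩
    obtain ⟨s, -, rfl⟩ := hx
    simpa using Finset.card_le_card (Finset.subset_univ s)
  constructor
  · intro hle
    have hmem : stabNum G ∈ {r | ∃ s : Finset (Fin k),
        (∀ i ∈ s, ∀ j ∈ s, ¬ G.Adj i j) ∧ s.card = r} :=
      Nat.sSup_mem ⟨0, ⟨∅, by simp⟩⟩ hbdd
    obtain ⟨s, hstab, hcard⟩ := hmem
    refine ⟨fun i j => if (i : ℕ) = (j : ℕ) then (if j ∈ s then 1 else -1) else 0,
      ?_, ?_, ?_, ?_⟩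
    · ext a b
      show ∑ i : Fin n, (if (i : ℕ) = (a : ℕ) then (if a ∈ s then (1:ℝ) else -1) else 0) *
        (if (i : ℕ) = (b : ℕ) then (if b ∈ s then (1:ℝ) else -1) else 0) =
        (1 : Matrix (Fin k) (Fin k) ℝ) a b
      rw [Finset.sum_eq_single (Fin.castLE hkn a)]
      · by_cases hab : a = b
        · subst hab
          simp only [Fin.coe_castLE, Matrix.one_apply_eq]
          by_cases hm : a ∈ s <;> simp [hm]
        · have : ¬ ((Fin.castLE hkn a : ℕ) = (b : ℕ)) := by
            simp only [Fin.coe_castLE]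
            exact fun h => hab (Fin.val_injective h)
          rw [if_neg this, mul_zero, Matrix.one_apply_ne' (by simpa [eq_comm] using hab)]
      · intro i _ hi
        have : ¬ ((i : ℕ) = (a : ℕ)) := by
          intro h
          apply hi
          exact Fin.ext (by simpa using h)
        rw [if_neg this, zero_mul]
      · simp
    · intro i j hij
      simp [hij]
    · intro i j hadj
      simp only [Fin.coe_castLE, if_pos rfl]
      have hne : ¬ (i ∈ s ∧ j ∈ s) := fun ⟨hi, hj⟩ => hstab i hi j hj hadj
      by_cases hi : i ∈ s
      · have hj : j ∉ s := fun hj => hne ⟨hi, hj⟩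
        simp [hi, hj]
      · by_cases hj : j ∈ s <;> simp [hi, hj] <;> norm_num
    · have : ∀ i : Fin k,
          (if ((Fin.castLE hkn i : Fin n) : ℕ) = (i : ℕ) then (if i ∈ s then (1:ℝ) else -1) else 0)
            = (if i ∈ s then (1:ℝ) else -1) := by
        intro i; rw [if_pos (by simp)]
      rw [Finset.sum_congr rfl (fun i _ => this i), sum_pm]
      have : (r : ℝ) ≤ s.card := by
        rw [hcard]; exact_mod_cast hle
      linarith
  · rintro ⟨X, horth, hoff, hedge, hsum⟩
    set d : Fin k → ℝ := fun i => X (Fin.castLE hkn i) i with hd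
    have hdsq : ∀ j, d j = 1 ∨ d j = -1 := by
      intro j
      have h1 : (Xᵀ * X) j j = 1 := by rw [horth]; simp
      rw [Matrix.mul_apply] at h1
      simp only [transpose_apply] at h1
      rw [Finset.sum_eq_single (Fin.castLE hkn j)] at h1
      · have : d j * d j = 1 := h1
        rcases mul_self_eq_one_iff.mp this with h | h
        · exact Or.inl h
        · exact Or.inr h
      · intro i _ hi
        rw [hoff i j (fun h => hi (Fin.ext (by simpa using h))), zero_mul]
      · simp
    set s : Finset (Fin k) := Finset.univ.filter (fun i => d i = 1) with hs
    have hstab : ∀ i ∈ s, ∀ j ∈ s, ¬ G.Adj i j := by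
      intro i hi j hj hadj
      have h1 : d i = 1 := (Finset.mem_filter.mp hi).2
      have h2 : d j = 1 := (Finset.mem_filter.mp hj).2
      have h3 : d i + d j ≤ 0 := hedge i j hadj
      rw [h1, h2] at h3
      linarith
    have hsumle : (2 : ℝ) * r - k ≤ 2 * s.card - k := by
      have heq : ∑ i : Fin k, d i = ∑ i : Fin k, (if i ∈ s then (1:ℝ) else -1) := by
        refine Finset.sum_congr rfl fun i _ => ?_
        rcases hdsq i with h | h
        · rw [if_pos (by simp [hs, h]), h]
        · rw [if_neg (by simp [hs, h]; norm_num), h]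
      rw [← sum_pm s, ← heq]
      exact hsum
    have hrcard : r ≤ s.card := by
      have : (r : ℝ) ≤ s.card := by linarith
      exact_mod_cast this
    exact le_trans hrcard (le_csSup hbdd ⟨s, hstab, rfl⟩)
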